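/- Let p, q ∈ ℚ∞ and x, y ∈ H. If ⟨v_p^x, v_q^y⟩ = 0 and ⟨v_q^y, v_p^x⟩ = 0, then p = q and x ∉ {y, -y}. -/

import Mathlib

open Matrix

abbrev V6 := Fin 6 → ℤ

def C6 : Matrix (Fin 6) (Fin 6) ℤ :=
  !![1,0,-1,-1,1,1;
     0,1,-1,-1,1,1;
     0,0,1,0,-1,-1;
     0,0,0,1,-1,-1;
     0,0,0,0,1,0;
     0,0,0,0,0,1]

/-- The bilinear form `⟨x,y⟩ = xᵀ C y` on `ℤ^6`. -/
def form (x y : V6) : ℤ := x ⬝ᵥ C6.mulVec y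

/-- The quaternion `i`. -/
def qI : Quaternion ℤ := ⟨0,1,0,0⟩
/-- The quaternion `j`. -/
def qJ : Quaternion ℤ := ⟨0,0,1,0⟩
/-- The quaternion `k`. -/
def qK : Quaternion ℤ := ⟨0,0,0,1⟩

instance : DecidableEq (Quaternion ℤ) := fun x y =>
  decidable_of_iff (x.re = y.re ∧ x.imI = y.imI ∧ x.imJ = y.imJ ∧ x.imK = y.imK)
    ⟨fun ⟨h1, h2, h3, h4⟩ => QuaternionAlgebra.ext h1 h2 h3 h4,
     fun h => by subst h; exact ⟨rfl, rfl, rfl, rfl⟩⟩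

/-- The quaternion group `H = {±1, ±i, ±j, ±k}`. -/
def Hset : Finset (Quaternion ℤ) := {1, -1, qI, -qI, qJ, -qJ, qK, -qK}

/-- The subset `H⁺ = {1, i, j, k}`. -/
def Hplus : Finset (Quaternion ℤ) := {1, qI, qJ, qK}

/-- Index type for the three special slopes `0`, `1`, `∞`. -/
inductive Ty | zero | one | inf
deriving DecidableEq

def h0 : V6 := ![0,0,1,1,1,1]
def h1 : V6 := ![1,1,2,2,1,1]
def hinf : V6 := ![1,1,1,1,0,0]

def hTy : Ty → V6
  | .zero => h0
  | .one => h1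
  | .inf => hinf

/-- The vectors `v_t^x` for `t ∈ {0,1,∞}` and `x ∈ H⁺`. -/
def vposTy : Ty → Quaternion ℤ → V6
  | .zero, x => if x = 1 then ![0,0,1,0,1,0] else if x = qI then ![-1,0,0,0,0,0]
      else if x = qJ then ![0,0,1,0,0,1] else ![0,1,1,1,1,1]
  | .one, x => if x = 1 then ![1,0,1,1,1,0] else if x = qI then ![0,1,1,1,1,0]
      else if x = qJ then ![0,0,1,0,0,0] else ![1,1,2,1,1,1]
  | .inf, x => if x = 1 then ![1,0,0,1,0,0] else if x = qI then ![1,1,1,1,1,0]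
      else if x = qJ then ![0,0,0,0,0,-1] else ![1,0,1,0,0,0]

/-- The vectors `v_t^x` for `t ∈ {0,1,∞}` and `x ∈ H`, with `v_t^{-x} = h_t - v_t^x`. -/
def vTy (t : Ty) (x : Quaternion ℤ) : V6 :=
  if x ∈ Hplus then vposTy t x else hTy t - vposTy t (-x)

/-- `a(q)`: numerator, with `a(∞) = 1`. -/
def aQ : WithTop ℚ → ℤ := WithTop.recTopCoe 1 Rat.num

/-- `b(q)`: denominator, with `b(∞) = 0`. -/
def bQ : WithTop ℚ → ℤ := WithTop.recTopCoe 0 (fun x => (x.den : ℤ))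

/-- The type `t(q) ∈ {0,1,∞}` of a slope `q`. -/
def tyQ (q : WithTop ℚ) : Ty :=
  if aQ q % 2 = 0 then Ty.zero else if bQ q % 2 = 1 then Ty.one else Ty.inf

/-- `⌊n⌋₂ = n/2` for even `n` and `(n-1)/2` for odd `n`. -/
def half2 (n : ℤ) : ℤ := if Even n then n / 2 else (n - 1) / 2

/-- `h_q = b(q)·h₀ + a(q)·h_∞`. -/
def hQ (q : WithTop ℚ) : V6 := bQ q • h0 + aQ q • hinf

/-- `v_q^x = v_{t(q)}^x + ⌊b(q)⌋₂·h₀ + ⌊a(q)⌋₂·h_∞`. -/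
def vQ (q : WithTop ℚ) (x : Quaternion ℤ) : V6 :=
  vTy (tyQ q) x + half2 (bQ q) • h0 + half2 (aQ q) • hinf

/-- `rk e = ⟨e, h_∞⟩`. -/
def rk (e : V6) : ℤ := form e hinf

/-- `deg e = ⟨h₀, e⟩`. -/
def degV (e : V6) : ℤ := form h0 e

/-- `e` is positive if `rk e > 0`, or `rk e = 0` and `deg e > 0`. -/
def PosV (e : V6) : Prop := 0 < rk e ∨ (rk e = 0 ∧ 0 < degV e)

/-- `d(p,q) = |a(q)b(p) - a(p)b(q)|`. -/
def dQ (p q : WithTop ℚ) : ℤ := |aQ q * bQ p - aQ p * bQ q|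

/-- Complexity `c(p) = |a(p)| + |b(p)| + |a(p)+b(p)|`. -/
def cpx (p : WithTop ℚ) : ℤ := |aQ p| + |bQ p| + |aQ p + bQ p|


def alT : Ty → ℤ | .zero => 0 | .one => 1 | .inf => 1
def beT : Ty → ℤ | .zero => 1 | .one => 1 | .inf => 0

lemma consts (t : Ty) : ∀ x ∈ Hset,
    form (vTy t x) h0 = -alT t ∧ form (vTy t x) hinf = beT t ∧
    form h0 (vTy t x) = alT t ∧ form hinf (vTy t x) = -beT t := by
  cases t <;> decide

lemma keyP (t t' : Ty) : ∀ x ∈ Hset, ∀ y ∈ Hset,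
    form (vTy t x) (vTy t' y) + form (vTy t' y) (vTy t x) = 0 →
    t = t' ∧ form (vTy t x) (vTy t' y) = 0 ∧ x ≠ y ∧ x ≠ -y := by
  cases t <;> cases t' <;> decide

lemma two_half2 (n : ℤ) : 2 * half2 n = n - n % 2 := by
  unfold half2
  split_ifs with h <;> rw [Int.even_iff] at h <;> omega

lemma not_both_even (q : WithTop ℚ) : ¬(aQ q % 2 = 0 ∧ bQ q % 2 = 0) := by
  induction q using WithTop.recTopCoe with
  | top => simp [aQ, bQ]
  | coe r =>
    rintro ⟨ha, hb⟩
    have h2 : (2:ℤ) ∣ r.num := Int.dvd_of_emod_eq_zero ha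
    have h3 : (2:ℤ) ∣ (r.den : ℤ) := Int.dvd_of_emod_eq_zero (by simpa [bQ] using hb)
    have h4 : (2:ℕ) ∣ r.num.natAbs := by
      have := Int.natAbs_dvd_natAbs.mpr (by simpa [aQ] using h2)
      simpa using this
    have h5 : (2:ℕ) ∣ r.den := by exact_mod_cast h3
    have h6 := Nat.dvd_gcd h4 h5
    rw [r.reduced] at h6
    omega

lemma ty_parity (q : WithTop ℚ) :
    aQ q % 2 = alT (tyQ q) ∧ bQ q % 2 = beT (tyQ q) := by
  have h := not_both_even q
  have ha := Int.emod_two_eq_zero_or_one (aQ q)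
  have hb := Int.emod_two_eq_zero_or_one (bQ q)
  unfold tyQ
  split_ifs with h1 h2 <;> simp only [alT, beT] <;> omega

@[simp] lemma aQ_top : aQ ⊤ = 1 := rfl
@[simp] lemma bQ_top : bQ ⊤ = 0 := rfl
@[simp] lemma aQ_coe (r : ℚ) : aQ (r : WithTop ℚ) = r.num := rfl
@[simp] lemma bQ_coe (r : ℚ) : bQ (r : WithTop ℚ) = (r.den : ℤ) := rfl

lemma bQ_eq_zero (q : WithTop ℚ) (h : bQ q = 0) : q = ⊤ := by
  induction q using WithTop.recTopCoe with
  | top => rfl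
  | coe r =>
    exfalso
    have hd : r.den ≠ 0 := r.den_nz
    rw [bQ_coe] at h
    exact hd (by exact_mod_cast h)

lemma eq_of_cross (p q : WithTop ℚ) (h : aQ q * bQ p - aQ p * bQ q = 0) : p = q := by
  induction p using WithTop.recTopCoe with
  | top =>
    refine (bQ_eq_zero q ?_).symm
    rw [aQ_top, bQ_top] at h; omega
  | coe r =>
    induction q using WithTop.recTopCoe with
    | top =>
      exfalso
      rw [aQ_top, bQ_top] at h
      have : bQ (r : WithTop ℚ) = 0 := by omega
      exact r.den_nz (by rw [bQ_coe] at this; exact_mod_cast this)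
    | coe s =>
      have hc : s.num * (r.den : ℤ) = r.num * (s.den : ℤ) := by
        rw [aQ_coe, aQ_coe, bQ_coe, bQ_coe] at h; omega
      congr 1
      rw [← Rat.num_div_den r, ← Rat.num_div_den s,
        div_eq_div_iff (by exact_mod_cast r.den_pos.ne') (by exact_mod_cast s.den_pos.ne')]
      exact_mod_cast hc.symm

set_option maxHeartbeats 1000000 in
lemma form_expand (v w : V6) (m n m' n' : ℤ) :
    form (v + m • h0 + n • hinf) (w + m' • h0 + n' • hinf) =
      form v w + m' * form v h0 + n' * form v hinf + m * form h0 w + n * form hinf w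
        + 2*(m*n') - 2*(n*m') := by
  simp only [form, C6, h0, hinf, dotProduct, mulVec, Fin.sum_univ_succ, Fin.sum_univ_zero,
    Pi.add_apply, Pi.smul_apply, smul_eq_mul, Matrix.cons_val_zero, Matrix.cons_val_succ,
    Matrix.cons_dotProduct, Matrix.dotProduct_of_isEmpty, Matrix.of_apply, Matrix.empty_val',
    Matrix.cons_val', Matrix.cons_val_fin_one]
  ring

theorem stmt11 (p q : WithTop ℚ) (x y : Quaternion ℤ) (hx : x ∈ Hset) (hy : y ∈ Hset)
    (h1 : form (vQ p x) (vQ q y) = 0) (h2 : form (vQ q y) (vQ p x) = 0) :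
    p = q ∧ ¬(x = y ∨ x = -y) := by
  obtain ⟨hap, hbp⟩ := ty_parity p
  obtain ⟨haq, hbq⟩ := ty_parity q
  unfold vQ at h1 h2
  rw [form_expand] at h1 h2
  obtain ⟨c1, c2, c3, c4⟩ := consts (tyQ p) x hx
  obtain ⟨d1, d2, d3, d4⟩ := consts (tyQ q) y hy
  rw [c1, c2, d3, d4] at h1
  rw [d1, d2, c3, c4] at h2
  have hsum : form (vTy (tyQ p) x) (vTy (tyQ q) y)
      + form (vTy (tyQ q) y) (vTy (tyQ p) x) = 0 := by linear_combination h1 + h2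
  obtain ⟨htt, hK0, hxy, hxy'⟩ := keyP (tyQ p) (tyQ q) x hx y hy hsum
  refine ⟨?_, fun h => h.elim hxy hxy'⟩
  apply eq_of_cross
  rw [← htt] at h1 haq hbq hK0
  rw [hK0] at h1
  have e2a := two_half2 (aQ p); have e2b := two_half2 (bQ p)
  have e2a' := two_half2 (aQ q); have e2b' := two_half2 (bQ q)
  generalize hE : alT (tyQ p) = e at h1 hap haq
  generalize hF : beT (tyQ p) = f at h1 hbp hbq
  generalize hm : half2 (bQ p) = m at h1 e2b
  generalize hn : half2 (aQ p) = n at h1 e2a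
  generalize hm' : half2 (bQ q) = m' at h1 e2b'
  generalize hn' : half2 (aQ q) = n' at h1 e2a'
  have hA : aQ p = 2*n + e := by omega
  have hB : bQ p = 2*m + f := by omega
  have hA' : aQ q = 2*n' + e := by omega
  have hB' : bQ q = 2*m' + f := by omega
  rw [hA, hB, hA', hB']
  linear_combination 2 * h1
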